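/- Let d ≥ 2 be an integer and a ∈ (0,1]. Let Γ, U be compact subsets of ℝ^d, μ_b, μ_i Borel probability measures supported on Γ and U, and F, A : ℝ^d → ℝ bounded measurable functions. Let T_b ⊆ Γ be a finite set of m_b distinct points that is an ε_b-net of Γ and T_i ⊆ U a finite set of m_i distinct points that is an ε_i-net of U. Assume: (i) there are constants K_m, K_n, K_z ≥ 0 such that |F(x) − F(x')|² ≤ K_m² ε_b^{2a} + K_n² ε_b^{2a+d−1} whenever x, x' ∈ Γ with ‖x − x'‖ ≤ ε_b, and |A(y) − A(y')|² ≤ K_z² ε_i^{2a+d} whenever y, y' ∈ U with ‖y − y'‖ ≤ ε_i; (ii) there are constants C_b, C_i > 0 with μ_b(B̄_ε(x) ∩ Γ) ≤ C_b ε^{d−1} and μ_i(B̄_ε(y) ∩ U) ≤ C_i ε^d for every ε > 0, x ∈ Γ, y ∈ U, where B̄_ε denotes the closed ball of radius ε; (iii) the Voronoi cells of T_b relative to Γ pairwise intersect in μ_b-null sets, and the Voronoi cells of T_i relative to U pairwise intersect in μ_i-null sets. Then Loss ≤ C₁ · Loss_m + 3 · max{K_m², K_n², K_z²} · (ε_b^{2a}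 + ε_b^{2a+d−1} + ε_i^{2a+d}), where C₁ = 3 C_b C_i m_b m_i ε_b^{d−1} ε_i^{d}. -/

import Mathlib

open MeasureTheory

namespace Stmt1Aux

lemma sq_add3 (p q r : ℝ) : (p + q + r) ^ 2 ≤ 3 * (p ^ 2 + q ^ 2 + r ^ 2) := by
  nlinarith [sq_nonneg (p - q), sq_nonneg (q - r), sq_nonneg (p - r)]

variable {d : ℕ}

def cell (S : Set (EuclideanSpace ℝ (Fin d))) (T : Finset (EuclideanSpace ℝ (Fin d)))
    (t : EuclideanSpace ℝ (Fin d)) : Set (EuclideanSpace ℝ (Fin d)) :=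
  {x ∈ S | ∀ t'' ∈ T, ‖x - t‖ ≤ ‖x - t''‖}

lemma cell_meas {S : Set (EuclideanSpace ℝ (Fin d))} (hS : IsClosed S)
    (T : Finset (EuclideanSpace ℝ (Fin d))) (t : EuclideanSpace ℝ (Fin d)) :
    MeasurableSet (cell S T t) := by
  have h : cell S T t = S ∩ ⋂ t'' ∈ T, {x : EuclideanSpace ℝ (Fin d) | ‖x - t‖ ≤ ‖x - t''‖} := by
    ext x; simp [cell, Set.mem_iInter]
  rw [h]
  refine hS.measurableSet.inter (MeasurableSet.biInter T.countable_toSet fun t'' _ => ?_)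
  exact (isClosed_le ((continuous_id.sub continuous_const).norm)
    ((continuous_id.sub continuous_const).norm)).measurableSet

lemma cell_subset {S : Set (EuclideanSpace ℝ (Fin d))} {T : Finset (EuclideanSpace ℝ (Fin d))}
    {ε : ℝ} (hnet : ∀ x ∈ S, ∃ t ∈ T, ‖x - t‖ ≤ ε) (t : EuclideanSpace ℝ (Fin d)) :
    cell S T t ⊆ Metric.closedBall t ε ∩ S := by
  rintro x ⟨hxS, hmin⟩
  obtain ⟨t', ht', ht'ε⟩ := hnet x hxS
  exact ⟨by rw [Metric.mem_closedBall, dist_eq_norm]; exact le_trans (hmin t' ht') ht'ε, hxS⟩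

lemma cell_cover {S : Set (EuclideanSpace ℝ (Fin d))} {T : Finset (EuclideanSpace ℝ (Fin d))}
    {ε : ℝ} (hnet : ∀ x ∈ S, ∃ t ∈ T, ‖x - t‖ ≤ ε) :
    S = ⋃ t ∈ T, cell S T t := by
  ext x
  constructor
  · intro hx
    obtain ⟨t0, ht0, _⟩ := hnet x hx
    obtain ⟨t, htT, hmin⟩ := T.exists_min_image (fun t => ‖x - t‖) ⟨t0, ht0⟩
    exact Set.mem_biUnion htT ⟨hx, hmin⟩
  · intro hx
    simp only [Set.mem_iUnion] at hx
    obtain ⟨t, _, hxS, _⟩ := hx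
    exact hxS

end Stmt1Aux

set_option maxHeartbeats 1000000 in
/-- Lemma 1 of the paper: let `Γ, U` be compact subsets of `ℝ^d` (`d ≥ 2`), `μ_b, μ_i`
Borel probability measures supported on `Γ` and `U`, `F, A` bounded measurable functions,
`T_b ⊆ Γ` an `ε_b`-net of `Γ` with `m_b` distinct points and `T_i ⊆ U` an `ε_i`-net of `U`
with `m_i` distinct points. Assume the modulus-of-continuity bounds (i), the ball
conditions (ii) with constants `C_b, C_i`, and that the Voronoi cells of `T_b` (resp.
`T_i`) relative to `Γ` (resp. `U`) pairwise intersect in null sets (iii). Then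
`Loss ≤ C₁ · Loss_m + 3 max{K_m², K_n², K_z²} (ε_b^{2a} + ε_b^{2a+d−1} + ε_i^{2a+d})`
with `C₁ = 3 C_b C_i m_b m_i ε_b^{d−1} ε_i^d`. -/
theorem stmt_1 {d : ℕ} (hd : 2 ≤ d) (a : ℝ) (ha : 0 < a) (ha1 : a ≤ 1)
    (Γ U : Set (EuclideanSpace ℝ (Fin d))) (hΓ : IsCompact Γ) (hU : IsCompact U)
    (μb μi : Measure (EuclideanSpace ℝ (Fin d)))
    [IsProbabilityMeasure μb] [IsProbabilityMeasure μi]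
    (hμbΓ : μb Γ = 1) (hμiU : μi U = 1)
    (F A : EuclideanSpace ℝ (Fin d) → ℝ) (hFmeas : Measurable F) (hAmeas : Measurable A)
    (hFbdd : ∃ M, ∀ x, |F x| ≤ M) (hAbdd : ∃ M, ∀ y, |A y| ≤ M)
    (Tb Ti : Finset (EuclideanSpace ℝ (Fin d))) (mb mi : ℕ)
    (hmb : Tb.card = mb) (hmi : Ti.card = mi)
    (hTbΓ : (Tb : Set (EuclideanSpace ℝ (Fin d))) ⊆ Γ)
    (hTiU : (Ti : Set (EuclideanSpace ℝ (Fin d))) ⊆ U)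
    (εb εi : ℝ) (hεb : 0 < εb) (hεi : 0 < εi)
    (hnetb : ∀ x ∈ Γ, ∃ t ∈ Tb, ‖x - t‖ ≤ εb)
    (hneti : ∀ y ∈ U, ∃ t ∈ Ti, ‖y - t‖ ≤ εi)
    (Km Kn Kz : ℝ) (hKm : 0 ≤ Km) (hKn : 0 ≤ Kn) (hKz : 0 ≤ Kz)
    -- (i) modulus-of-continuity conditions
    (hF : ∀ x ∈ Γ, ∀ x' ∈ Γ, ‖x - x'‖ ≤ εb →
      (F x - F x') ^ 2 ≤ Km ^ 2 * εb ^ (2 * a) + Kn ^ 2 * εb ^ (2 * a + (d : ℝ) - 1))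
    (hA : ∀ y ∈ U, ∀ y' ∈ U, ‖y - y'‖ ≤ εi →
      (A y - A y') ^ 2 ≤ Kz ^ 2 * εi ^ (2 * a + (d : ℝ)))
    -- (ii) ball conditions
    (Cb Ci : ℝ) (hCb : 0 < Cb) (hCi : 0 < Ci)
    (hballb : ∀ ε > (0 : ℝ), ∀ x ∈ Γ,
      μb (Metric.closedBall x ε ∩ Γ) ≤ ENNReal.ofReal (Cb * ε ^ ((d : ℝ) - 1)))
    (hballi : ∀ ε > (0 : ℝ), ∀ y ∈ U,
      μi (Metric.closedBall y ε ∩ U) ≤ ENNReal.ofReal (Ci * ε ^ (d : ℝ)))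
    -- (iii) Voronoi cells pairwise intersect in null sets
    (hvorb : ∀ t ∈ Tb, ∀ t' ∈ Tb, t ≠ t' →
      μb ({x ∈ Γ | ∀ t'' ∈ Tb, ‖x - t‖ ≤ ‖x - t''‖} ∩
          {x ∈ Γ | ∀ t'' ∈ Tb, ‖x - t'‖ ≤ ‖x - t''‖}) = 0)
    (hvori : ∀ t ∈ Ti, ∀ t' ∈ Ti, t ≠ t' →
      μi ({y ∈ U | ∀ t'' ∈ Ti, ‖y - t‖ ≤ ‖y - t''‖} ∩
          {y ∈ U | ∀ t'' ∈ Ti, ‖y - t'‖ ≤ ‖y - t''‖}) = 0) :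
    (∫ x in Γ, ∫ y in U, (F x - A y) ^ 2 ∂μi ∂μb) ≤
      (3 * Cb * Ci * (mb : ℝ) * (mi : ℝ) * εb ^ ((d : ℝ) - 1) * εi ^ (d : ℝ)) *
        ((1 / ((mb : ℝ) * (mi : ℝ))) * ∑ t ∈ Tb, ∑ t' ∈ Ti, (F t - A t') ^ 2) +
      3 * max (max (Km ^ 2) (Kn ^ 2)) (Kz ^ 2) *
        (εb ^ (2 * a) + εb ^ (2 * a + (d : ℝ) - 1) + εi ^ (2 * a + (d : ℝ))) := by
  classical
  set Ab := Stmt1Aux.cell Γ Tb with hAbdef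
  set Bi := Stmt1Aux.cell U Ti with hBidef
  have hAbm : ∀ t, MeasurableSet (Ab t) := Stmt1Aux.cell_meas hΓ.isClosed Tb
  have hBim : ∀ s, MeasurableSet (Bi s) := Stmt1Aux.cell_meas hU.isClosed Ti
  have hcovb : Γ = ⋃ t ∈ Tb, Ab t := Stmt1Aux.cell_cover hnetb
  have hcovi : U = ⋃ s ∈ Ti, Bi s := Stmt1Aux.cell_cover hneti
  have hdisjb : Set.Pairwise (↑Tb) (Function.onFun (MeasureTheory.AEDisjoint μb) Ab) :=
    fun t ht t' ht' hne => hvorb t ht t' ht' hne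
  have hdisji : Set.Pairwise (↑Ti) (Function.onFun (MeasureTheory.AEDisjoint μi) Bi) :=
    fun t ht t' ht' hne => hvori t ht t' ht' hne
  have hsumb : ∑ t ∈ Tb, μb (Ab t) = 1 := by
    rw [← measure_biUnion_finset₀ hdisjb (fun t _ => (hAbm t).nullMeasurableSet), ← hcovb, hμbΓ]
  have hsumi : ∑ s ∈ Ti, μi (Bi s) = 1 := by
    rw [← measure_biUnion_finset₀ hdisji (fun s _ => (hBim s).nullMeasurableSet), ← hcovi, hμiU]
  -- nonemptiness and positivity of cardinalities
  have hΓne : Γ.Nonempty := by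
    by_contra h
    rw [Set.not_nonempty_iff_eq_empty] at h
    rw [h, measure_empty] at hμbΓ
    exact zero_ne_one hμbΓ
  have hUne : U.Nonempty := by
    by_contra h
    rw [Set.not_nonempty_iff_eq_empty] at h
    rw [h, measure_empty] at hμiU
    exact zero_ne_one hμiU
  have hmbpos : 0 < mb := by
    obtain ⟨x, hx⟩ := hΓne
    obtain ⟨t, ht, -⟩ := hnetb x hx
    rw [← hmb]; exact Finset.card_pos.2 ⟨t, ht⟩
  have hmipos : 0 < mi := by
    obtain ⟨y, hy⟩ := hUne
    obtain ⟨s, hs, -⟩ := hneti y hy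
    rw [← hmi]; exact Finset.card_pos.2 ⟨s, hs⟩
  have hmbR : ((mb : ℝ)) ≠ 0 := Nat.cast_ne_zero.2 hmbpos.ne'
  have hmiR : ((mi : ℝ)) ≠ 0 := Nat.cast_ne_zero.2 hmipos.ne'
  -- constants
  set Eb := Km ^ 2 * εb ^ (2 * a) + Kn ^ 2 * εb ^ (2 * a + (d : ℝ) - 1) with hEbdef
  set Ei := Kz ^ 2 * εi ^ (2 * a + (d : ℝ)) with hEidef
  have hp1 : (0 : ℝ) ≤ εb ^ (2 * a) := Real.rpow_nonneg hεb.le _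
  have hp2 : (0 : ℝ) ≤ εb ^ (2 * a + (d : ℝ) - 1) := Real.rpow_nonneg hεb.le _
  have hp3 : (0 : ℝ) ≤ εi ^ (2 * a + (d : ℝ)) := Real.rpow_nonneg hεi.le _
  have hEb0 : 0 ≤ Eb := add_nonneg (mul_nonneg (sq_nonneg _) hp1) (mul_nonneg (sq_nonneg _) hp2)
  have hEi0 : 0 ≤ Ei := mul_nonneg (sq_nonneg _) hp3
  set cb := Cb * εb ^ ((d : ℝ) - 1) with hcbdef
  set ci := Ci * εi ^ (d : ℝ) with hcidef
  have hcb0 : 0 ≤ cb := mul_nonneg hCb.le (Real.rpow_nonneg hεb.le _)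
  have hci0 : 0 ≤ ci := mul_nonneg hCi.le (Real.rpow_nonneg hεi.le _)
  have hμAb : ∀ t ∈ Tb, μb (Ab t) ≤ ENNReal.ofReal cb := fun t ht =>
    le_trans (measure_mono (Stmt1Aux.cell_subset hnetb t)) (hballb εb hεb t (hTbΓ ht))
  have hμBi : ∀ s ∈ Ti, μi (Bi s) ≤ ENNReal.ofReal ci := fun s hs =>
    le_trans (measure_mono (Stmt1Aux.cell_subset hneti s)) (hballi εi hεi s (hTiU hs))
  set S := ∑ t ∈ Tb, ∑ t' ∈ Ti, (F t - A t') ^ 2 with hSdef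
  have hS0 : 0 ≤ S := Finset.sum_nonneg fun _ _ => Finset.sum_nonneg fun _ _ => sq_nonneg _
  -- pointwise bound on cells
  have hpt : ∀ t ∈ Tb, ∀ s ∈ Ti, ∀ x ∈ Ab t, ∀ y ∈ Bi s,
      (F x - A y) ^ 2 ≤ 3 * (Eb + Ei + (F t - A s) ^ 2) := by
    intro t ht s hs x hx y hy
    obtain ⟨hxb, hxΓ⟩ := Stmt1Aux.cell_subset hnetb t hx
    obtain ⟨hyb, hyU⟩ := Stmt1Aux.cell_subset hneti s hy
    have hxt : ‖x - t‖ ≤ εb := by rwa [Metric.mem_closedBall, dist_eq_norm] at hxb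
    have hys : ‖y - s‖ ≤ εi := by rwa [Metric.mem_closedBall, dist_eq_norm] at hyb
    have h1 : (F x - F t) ^ 2 ≤ Eb := hF x hxΓ t (hTbΓ ht) hxt
    have h2 : (A y - A s) ^ 2 ≤ Ei := hA y hyU s (hTiU hs) hys
    have h3 := Stmt1Aux.sq_add3 (F x - F t) (F t - A s) (A s - A y)
    nlinarith [h1, h2, h3]
  -- measurability facts
  have hfm : Measurable fun p : EuclideanSpace ℝ (Fin d) × EuclideanSpace ℝ (Fin d) =>
      ENNReal.ofReal ((F p.1 - A p.2) ^ 2) :=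
    (((hFmeas.comp measurable_fst).sub (hAmeas.comp measurable_snd)).pow_const 2).ennreal_ofReal
  have hGmeas : ∀ s : EuclideanSpace ℝ (Fin d), Measurable fun x =>
      ∫⁻ y in Bi s, ENNReal.ofReal ((F x - A y) ^ 2) ∂μi :=
    fun s => Measurable.lintegral_prod_right hfm
  have hGUmeas : Measurable fun x =>
      ∫⁻ y in U, ENNReal.ofReal ((F x - A y) ^ 2) ∂μi :=
    Measurable.lintegral_prod_right hfm
  -- decomposition of the double lintegral
  set L := ∫⁻ x in Γ, ∫⁻ y in U, ENNReal.ofReal ((F x - A y) ^ 2) ∂μi ∂μb with hLdef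
  have hinner : ∀ x, (∫⁻ y in U, ENNReal.ofReal ((F x - A y) ^ 2) ∂μi)
      = ∑ s ∈ Ti, ∫⁻ y in Bi s, ENNReal.ofReal ((F x - A y) ^ 2) ∂μi := by
    intro x
    conv_lhs => rw [hcovi]
    exact lintegral_biUnion_finset₀ hdisji (fun s _ => (hBim s).nullMeasurableSet) _
  have hL1 : L = ∑ s ∈ Ti, ∑ t ∈ Tb,
      ∫⁻ x in Ab t, ∫⁻ y in Bi s, ENNReal.ofReal ((F x - A y) ^ 2) ∂μi ∂μb := by
    rw [hLdef]
    calc (∫⁻ x in Γ, ∫⁻ y in U, ENNReal.ofReal ((F x - A y) ^ 2) ∂μi ∂μb)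
        = ∫⁻ x in Γ, ∑ s ∈ Ti, ∫⁻ y in Bi s, ENNReal.ofReal ((F x - A y) ^ 2) ∂μi ∂μb :=
          lintegral_congr fun x => hinner x
      _ = ∑ s ∈ Ti, ∫⁻ x in Γ, ∫⁻ y in Bi s, ENNReal.ofReal ((F x - A y) ^ 2) ∂μi ∂μb :=
          lintegral_finset_sum Ti (fun s _ => hGmeas s)
      _ = ∑ s ∈ Ti, ∑ t ∈ Tb,
          ∫⁻ x in Ab t, ∫⁻ y in Bi s, ENNReal.ofReal ((F x - A y) ^ 2) ∂μi ∂μb := by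
          refine Finset.sum_congr rfl fun s _ => ?_
          conv_lhs => rw [hcovb]
          exact lintegral_biUnion_finset₀ hdisjb (fun t _ => (hAbm t).nullMeasurableSet) _
  -- bound each term
  have hkey : ∀ t ∈ Tb, ∀ s ∈ Ti,
      (∫⁻ x in Ab t, ∫⁻ y in Bi s, ENNReal.ofReal ((F x - A y) ^ 2) ∂μi ∂μb)
        ≤ ENNReal.ofReal (3 * (Eb + Ei)) * μi (Bi s) * μb (Ab t)
          + ENNReal.ofReal (3 * cb * ci * (F t - A s) ^ 2) := by
    intro t ht s hs
    have hc0 : 0 ≤ 3 * (Eb + Ei) := by linarith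
    have step1 : (∫⁻ x in Ab t, ∫⁻ y in Bi s, ENNReal.ofReal ((F x - A y) ^ 2) ∂μi ∂μb)
        ≤ ENNReal.ofReal (3 * (Eb + Ei + (F t - A s) ^ 2)) * μi (Bi s) * μb (Ab t) := by
      calc (∫⁻ x in Ab t, ∫⁻ y in Bi s, ENNReal.ofReal ((F x - A y) ^ 2) ∂μi ∂μb)
          ≤ ∫⁻ _x in Ab t, ENNReal.ofReal (3 * (Eb + Ei + (F t - A s) ^ 2)) * μi (Bi s) ∂μb := by
            refine setLIntegral_mono' (hAbm t) fun x hx => ?_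
            calc (∫⁻ y in Bi s, ENNReal.ofReal ((F x - A y) ^ 2) ∂μi)
                ≤ ∫⁻ _y in Bi s, ENNReal.ofReal (3 * (Eb + Ei + (F t - A s) ^ 2)) ∂μi :=
                  setLIntegral_mono' (hBim s) fun y hy =>
                    ENNReal.ofReal_le_ofReal (hpt t ht s hs x hx y hy)
              _ = ENNReal.ofReal (3 * (Eb + Ei + (F t - A s) ^ 2)) * μi (Bi s) :=
                  setLIntegral_const _ _
        _ = ENNReal.ofReal (3 * (Eb + Ei + (F t - A s) ^ 2)) * μi (Bi s) * μb (Ab t) :=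
            setLIntegral_const _ _
    have hsplit : ENNReal.ofReal (3 * (Eb + Ei + (F t - A s) ^ 2))
        = ENNReal.ofReal (3 * (Eb + Ei)) + ENNReal.ofReal (3 * (F t - A s) ^ 2) := by
      rw [← ENNReal.ofReal_add hc0 (by positivity)]
      congr 1
      ring
    calc (∫⁻ x in Ab t, ∫⁻ y in Bi s, ENNReal.ofReal ((F x - A y) ^ 2) ∂μi ∂μb)
        ≤ ENNReal.ofReal (3 * (Eb + Ei + (F t - A s) ^ 2)) * μi (Bi s) * μb (Ab t) := step1
      _ = ENNReal.ofReal (3 * (Eb + Ei)) * μi (Bi s) * μb (Ab t)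
          + ENNReal.ofReal (3 * (F t - A s) ^ 2) * μi (Bi s) * μb (Ab t) := by
          rw [hsplit, add_mul, add_mul]
      _ ≤ ENNReal.ofReal (3 * (Eb + Ei)) * μi (Bi s) * μb (Ab t)
          + ENNReal.ofReal (3 * cb * ci * (F t - A s) ^ 2) := by
          gcongr
          calc ENNReal.ofReal (3 * (F t - A s) ^ 2) * μi (Bi s) * μb (Ab t)
              ≤ ENNReal.ofReal (3 * (F t - A s) ^ 2) * ENNReal.ofReal ci * ENNReal.ofReal cb :=
                mul_le_mul' (mul_le_mul' le_rfl (hμBi s hs)) (hμAb t ht)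
            _ = ENNReal.ofReal (3 * cb * ci * (F t - A s) ^ 2) := by
                rw [← ENNReal.ofReal_mul (by positivity),
                  ← ENNReal.ofReal_mul (mul_nonneg (by positivity) hci0)]
                congr 1
                ring
  -- sum the bounds
  have hsum1 : ∑ s ∈ Ti, ∑ t ∈ Tb,
      ENNReal.ofReal (3 * (Eb + Ei)) * μi (Bi s) * μb (Ab t)
      = ENNReal.ofReal (3 * (Eb + Ei)) := by
    simp_rw [← Finset.mul_sum, hsumb, mul_one]
    rw [← Finset.mul_sum, hsumi, mul_one]
  have hsum2 : ∑ s ∈ Ti, ∑ t ∈ Tb, ENNReal.ofReal (3 * cb * ci * (F t - A s) ^ 2)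
      = ENNReal.ofReal (3 * cb * ci * S) := by
    have h1 : 3 * cb * ci * S = ∑ s ∈ Ti, ∑ t ∈ Tb, 3 * cb * ci * (F t - A s) ^ 2 := by
      rw [hSdef, Finset.sum_comm, Finset.mul_sum]
      refine Finset.sum_congr rfl fun s _ => ?_
      rw [Finset.mul_sum]
    have hnn : ∀ (t s : EuclideanSpace ℝ (Fin d)), 0 ≤ 3 * cb * ci * (F t - A s) ^ 2 :=
      fun t s => mul_nonneg (mul_nonneg (mul_nonneg (by norm_num) hcb0) hci0) (sq_nonneg _)
    rw [h1, ENNReal.ofReal_sum_of_nonneg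
      (fun s _ => Finset.sum_nonneg fun t _ => hnn t s)]
    refine Finset.sum_congr rfl fun s _ => ?_
    rw [ENNReal.ofReal_sum_of_nonneg (fun t _ => hnn t s)]
  have hLbound : L ≤ ENNReal.ofReal (3 * (Eb + Ei) + 3 * cb * ci * S) := by
    rw [hL1]
    calc (∑ s ∈ Ti, ∑ t ∈ Tb,
        ∫⁻ x in Ab t, ∫⁻ y in Bi s, ENNReal.ofReal ((F x - A y) ^ 2) ∂μi ∂μb)
        ≤ ∑ s ∈ Ti, ∑ t ∈ Tb,
          (ENNReal.ofReal (3 * (Eb + Ei)) * μi (Bi s) * μb (Ab t)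
            + ENNReal.ofReal (3 * cb * ci * (F t - A s) ^ 2)) :=
          Finset.sum_le_sum fun s hs => Finset.sum_le_sum fun t ht => hkey t ht s hs
      _ = ENNReal.ofReal (3 * (Eb + Ei)) + ENNReal.ofReal (3 * cb * ci * S) := by
          simp_rw [Finset.sum_add_distrib]
          rw [hsum1, hsum2]
      _ = ENNReal.ofReal (3 * (Eb + Ei) + 3 * cb * ci * S) := by
          rw [ENNReal.ofReal_add (by linarith)
            (mul_nonneg (mul_nonneg (mul_nonneg (by norm_num) hcb0) hci0) hS0)]
  -- convert the Bochner integral to the lintegral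
  have hg : ∀ x, (∫ y in U, (F x - A y) ^ 2 ∂μi)
      = (∫⁻ y in U, ENNReal.ofReal ((F x - A y) ^ 2) ∂μi).toReal := fun x =>
    integral_eq_lintegral_of_nonneg_ae (Filter.Eventually.of_forall fun y => sq_nonneg _)
      (((measurable_const.sub hAmeas).pow_const 2).aestronglyMeasurable)
  have hLoss : (∫ x in Γ, ∫ y in U, (F x - A y) ^ 2 ∂μi ∂μb)
      = (∫⁻ x in Γ, ENNReal.ofReal
          ((∫⁻ y in U, ENNReal.ofReal ((F x - A y) ^ 2) ∂μi).toReal) ∂μb).toReal := by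
    rw [← integral_eq_lintegral_of_nonneg_ae
      (Filter.Eventually.of_forall fun x => ENNReal.toReal_nonneg)
      hGUmeas.ennreal_toReal.aestronglyMeasurable]
    exact integral_congr_ae (Filter.Eventually.of_forall fun x => hg x)
  have hmono : (∫⁻ x in Γ, ENNReal.ofReal
      ((∫⁻ y in U, ENNReal.ofReal ((F x - A y) ^ 2) ∂μi).toReal) ∂μb) ≤ L :=
    lintegral_mono fun x => ENNReal.ofReal_toReal_le
  have hloss_le : (∫ x in Γ, ∫ y in U, (F x - A y) ^ 2 ∂μi ∂μb)
      ≤ 3 * (Eb + Ei) + 3 * cb * ci * S := by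
    rw [hLoss]
    have hnn : 0 ≤ 3 * (Eb + Ei) + 3 * cb * ci * S := by
      have := mul_nonneg (mul_nonneg (mul_nonneg (show (0:ℝ) ≤ 3 by norm_num) hcb0) hci0) hS0
      linarith
    exact ENNReal.toReal_le_of_le_ofReal hnn (le_trans hmono hLbound)
  -- final real-number estimate
  refine le_trans hloss_le ?_
  have heq : (3 * Cb * Ci * (mb : ℝ) * (mi : ℝ) * εb ^ ((d : ℝ) - 1) * εi ^ (d : ℝ)) *
      ((1 / ((mb : ℝ) * (mi : ℝ))) * S) = 3 * cb * ci * S := by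
    rw [hcbdef, hcidef]
    field_simp
  rw [heq]
  have hM1 : Km ^ 2 ≤ max (max (Km ^ 2) (Kn ^ 2)) (Kz ^ 2) :=
    le_max_of_le_left (le_max_left _ _)
  have hM2 : Kn ^ 2 ≤ max (max (Km ^ 2) (Kn ^ 2)) (Kz ^ 2) :=
    le_max_of_le_left (le_max_right _ _)
  have hM3 : Kz ^ 2 ≤ max (max (Km ^ 2) (Kn ^ 2)) (Kz ^ 2) := le_max_right _ _
  have hEE : 3 * (Eb + Ei) ≤ 3 * max (max (Km ^ 2) (Kn ^ 2)) (Kz ^ 2) *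
      (εb ^ (2 * a) + εb ^ (2 * a + (d : ℝ) - 1) + εi ^ (2 * a + (d : ℝ))) := by
    rw [hEbdef, hEidef]
    nlinarith [mul_le_mul_of_nonneg_right hM1 hp1, mul_le_mul_of_nonneg_right hM2 hp2,
      mul_le_mul_of_nonneg_right hM3 hp3]
  linarith
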